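/- arXiv:1609.06425 — 2 statements merged into one kernel-verified Lean document; each statement's English description precedes it below -/
import Mathlib

section
/- Suppose F_0(z) = Σ_{d≥1} n_{0,d} e^{dz} (with n_{0,d} > 0) converges exactly on (-∞, x_0) and on this interval satisfies (27 + 2F_0' - 3F_0'') F_0''' = 6F_0 - 33F_0' + 54F_0'' + (F_0'')^2. If additionally 27 + 2F_0'(z) - 3F_0''(z) > 0 for all z < x_0, then F_0, F_0', F_0'' all have finite limits as z → x_0^-, and F_0(x_0^-) < F_0'(x_0^-) < F_0''(x_0^-) ≤ 27. -/
open Filter Set Real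

theorem limits_at_radius_from_wdvv
    (n : ℕ → ℝ) (hn0 : n 0 = 0) (hn : ∀ d : ℕ, 1 ≤ d → 0 < n d)
    (x0 : ℝ)
    (F : ℕ → ℝ → ℝ)
    (hF : ∀ k : ℕ, ∀ z : ℝ, F k z = ∑' d : ℕ, (d : ℝ) ^ k * n d * Real.exp (d * z))
    (hconv : ∀ z : ℝ, z < x0 →
      ∀ k : ℕ, k ≤ 3 → Summable (fun d : ℕ => (d : ℝ) ^ k * n d * Real.exp (d * z)))
    (hdiv : ∀ z : ℝ, x0 ≤ z → ¬ Summable (fun d : ℕ => n d * Real.exp (d * z)))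
    (hode : ∀ z : ℝ, z < x0 →
      (27 + 2 * F 1 z - 3 * F 2 z) * F 3 z =
        6 * F 0 z - 33 * F 1 z + 54 * F 2 z + (F 2 z) ^ 2)
    (hpos : ∀ z : ℝ, z < x0 → 0 < 27 + 2 * F 1 z - 3 * F 2 z) :
    ∃ L0 L1 L2 : ℝ,
      Filter.Tendsto (F 0) (nhdsWithin x0 (Set.Iio x0)) (nhds L0) ∧
      Filter.Tendsto (F 1) (nhdsWithin x0 (Set.Iio x0)) (nhds L1) ∧
      Filter.Tendsto (F 2) (nhdsWithin x0 (Set.Iio x0)) (nhds L2) ∧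
      L0 < L1 ∧ L1 < L2 ∧ L2 ≤ 27 := by
  have hn_nonneg : ∀ d : ℕ, 0 ≤ n d := by
    intro d
    cases d with
    | zero => simp [hn0]
    | succ m => exact (hn _ (Nat.succ_le_succ (Nat.zero_le _))).le
  have hterm_nonneg : ∀ (k : ℕ) (z : ℝ) (d : ℕ),
      0 ≤ (d : ℝ) ^ k * n d * Real.exp (d * z) := by
    intro k z d
    have := hn_nonneg d
    positivity
  -- monotonicity in z
  have hmono : ∀ k : ℕ, k ≤ 3 → MonotoneOn (F k) (Iio x0) := by
    intro k hk z1 h1 z2 h2 h12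
    rw [hF, hF]
    refine Summable.tsum_le_tsum (fun d => ?_) (hconv z1 h1 k hk) (hconv z2 h2 k hk)
    have hd : (d : ℝ) * z1 ≤ (d : ℝ) * z2 :=
      mul_le_mul_of_nonneg_left h12 (Nat.cast_nonneg d)
    have hc : 0 ≤ (d : ℝ) ^ k * n d := mul_nonneg (by positivity) (hn_nonneg d)
    exact mul_le_mul_of_nonneg_left (Real.exp_le_exp.mpr hd) hc
  -- comparison across k
  have hcmp : ∀ j k : ℕ, j ≤ k → k ≤ 3 → ∀ z : ℝ, z < x0 → F j z ≤ F k z := by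
    intro j k hjk hk3 z hz
    rw [hF, hF]
    refine Summable.tsum_le_tsum (fun d => ?_) (hconv z hz j (hjk.trans hk3)) (hconv z hz k hk3)
    cases d with
    | zero => simp [hn0]
    | succ m =>
      have h1 : (1 : ℝ) ≤ ((m + 1 : ℕ) : ℝ) := by exact_mod_cast Nat.succ_le_succ (Nat.zero_le m)
      have hp : ((m + 1 : ℕ) : ℝ) ^ j ≤ ((m + 1 : ℕ) : ℝ) ^ k := pow_le_pow_right₀ h1 hjk
      have := hn_nonneg (m + 1)
      have he : (0 : ℝ) ≤ Real.exp (((m + 1 : ℕ) : ℝ) * z) := (Real.exp_pos _).le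
      push_cast at hp ⊢
      exact mul_le_mul_of_nonneg_right
        (mul_le_mul_of_nonneg_right hp (hn_nonneg _)) (Real.exp_pos _).le
  -- F 2 z ≤ 27
  have hF2le : ∀ z : ℝ, z < x0 → F 2 z ≤ 27 := by
    intro z hz
    have h1 := hpos z hz
    have h2 := hcmp 1 2 (by norm_num) (by norm_num) z hz
    linarith
  have hF0nonneg : ∀ k : ℕ, k ≤ 3 → ∀ z : ℝ, z < x0 → 0 ≤ F k z := by
    intro k hk z hz
    rw [hF]
    exact tsum_nonneg (hterm_nonneg k z)
  have hbdd : ∀ k : ℕ, k ≤ 2 → BddAbove (F k '' Iio x0) := by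
    intro k hk
    refine ⟨27, fun y hy => ?_⟩
    obtain ⟨z, hz, rfl⟩ := hy
    exact le_trans (hcmp k 2 hk (by norm_num) z hz) (hF2le z hz)
  have hT0 := (hmono 0 (by norm_num)).tendsto_nhdsLT (hbdd 0 (by norm_num))
  have hT1 := (hmono 1 (by norm_num)).tendsto_nhdsLT (hbdd 1 (by norm_num))
  have hT2 := (hmono 2 (by norm_num)).tendsto_nhdsLT (hbdd 2 (by norm_num))
  set L0 := sSup (F 0 '' Iio x0)
  set L1 := sSup (F 1 '' Iio x0)
  set L2 := sSup (F 2 '' Iio x0)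
  refine ⟨L0, L1, L2, hT0, hT1, hT2, ?_, ?_, ?_⟩
  · -- L0 < L1
    -- difference series
    have key : ∀ z : ℝ, z < x0 →
        F 1 z - F 0 z = ∑' d : ℕ, (((d : ℝ) - 1) * n d * Real.exp (d * z)) := by
      intro z hz
      rw [hF, hF, ← Summable.tsum_sub (hconv z hz 1 (by norm_num)) (hconv z hz 0 (by norm_num))]
      congr 1; funext d
      cases d with
      | zero => simp [hn0]
      | succ m => push_cast; ring
    have hsumd : ∀ z : ℝ, z < x0 →
        Summable (fun d : ℕ => ((d : ℝ) - 1) * n d * Real.exp (d * z)) := by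
      intro z hz
      have := (hconv z hz 1 (by norm_num)).sub (hconv z hz 0 (by norm_num))
      refine this.congr fun d => ?_
      cases d with
      | zero => simp [hn0]
      | succ m => push_cast; ring
    have htermd : ∀ (z : ℝ) (d : ℕ), 0 ≤ ((d : ℝ) - 1) * n d * Real.exp (d * z) := by
      intro z d
      cases d with
      | zero => simp [hn0]
      | succ m =>
        have h1 : (0 : ℝ) ≤ ((m + 1 : ℕ) : ℝ) - 1 := by push_cast; linarith
        exact mul_nonneg (mul_nonneg h1 (hn_nonneg _)) (Real.exp_pos _).le
    have hz1 : x0 - 1 < x0 := by linarith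
    set c := F 1 (x0 - 1) - F 0 (x0 - 1) with hc
    have hcpos : 0 < c := by
      rw [hc, key _ hz1]
      refine Summable.tsum_pos (hsumd _ hz1) (htermd _) 2 ?_
      have := hn 2 (by norm_num)
      have := Real.exp_pos ((2 : ℝ) * (x0 - 1))
      push_cast
      nlinarith
    have hevent : ∀ᶠ z in nhdsWithin x0 (Iio x0), c ≤ F 1 z - F 0 z := by
      refine eventually_of_mem (Ico_mem_nhdsLT hz1) fun z hz => ?_
      rw [hc, key _ hz1, key _ hz.2]
      refine Summable.tsum_le_tsum (fun d => ?_) (hsumd _ hz1) (hsumd _ hz.2)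
      cases d with
      | zero => simp [hn0]
      | succ m =>
        have h1 : (0 : ℝ) ≤ ((m + 1 : ℕ) : ℝ) - 1 := by push_cast; linarith
        have hd : ((m + 1 : ℕ) : ℝ) * (x0 - 1) ≤ ((m + 1 : ℕ) : ℝ) * z :=
          mul_le_mul_of_nonneg_left hz.1 (Nat.cast_nonneg _)
        exact mul_le_mul_of_nonneg_left (Real.exp_le_exp.mpr hd)
          (mul_nonneg h1 (hn_nonneg _))
    have := ge_of_tendsto (hT1.sub hT0) hevent
    linarith
  · -- L1 < L2
    have key : ∀ z : ℝ, z < x0 →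
        F 2 z - F 1 z = ∑' d : ℕ, (((d : ℝ) ^ 2 - d) * n d * Real.exp (d * z)) := by
      intro z hz
      rw [hF, hF, ← Summable.tsum_sub (hconv z hz 2 (by norm_num)) (hconv z hz 1 (by norm_num))]
      congr 1; funext d
      cases d with
      | zero => simp [hn0]
      | succ m => push_cast; ring
    have hsumd : ∀ z : ℝ, z < x0 →
        Summable (fun d : ℕ => ((d : ℝ) ^ 2 - d) * n d * Real.exp (d * z)) := by
      intro z hz
      have := (hconv z hz 2 (by norm_num)).sub (hconv z hz 1 (by norm_num))
      refine this.congr fun d => ?_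
      cases d with
      | zero => simp [hn0]
      | succ m => push_cast; ring
    have htermd : ∀ (z : ℝ) (d : ℕ), 0 ≤ ((d : ℝ) ^ 2 - d) * n d * Real.exp (d * z) := by
      intro z d
      cases d with
      | zero => simp [hn0]
      | succ m =>
        have h1 : (0 : ℝ) ≤ ((m + 1 : ℕ) : ℝ) ^ 2 - ((m + 1 : ℕ) : ℝ) := by
          push_cast; nlinarith [Nat.cast_nonneg (α := ℝ) m]
        exact mul_nonneg (mul_nonneg h1 (hn_nonneg _)) (Real.exp_pos _).le
    have hz1 : x0 - 1 < x0 := by linarith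
    set c := F 2 (x0 - 1) - F 1 (x0 - 1) with hc
    have hcpos : 0 < c := by
      rw [hc, key _ hz1]
      refine Summable.tsum_pos (hsumd _ hz1) (htermd _) 2 ?_
      have := hn 2 (by norm_num)
      have := Real.exp_pos ((2 : ℝ) * (x0 - 1))
      push_cast
      nlinarith
    have hevent : ∀ᶠ z in nhdsWithin x0 (Iio x0), c ≤ F 2 z - F 1 z := by
      refine eventually_of_mem (Ico_mem_nhdsLT hz1) fun z hz => ?_
      rw [hc, key _ hz1, key _ hz.2]
      refine Summable.tsum_le_tsum (fun d => ?_) (hsumd _ hz1) (hsumd _ hz.2)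
      cases d with
      | zero => simp [hn0]
      | succ m =>
        have h1 : (0 : ℝ) ≤ ((m + 1 : ℕ) : ℝ) ^ 2 - ((m + 1 : ℕ) : ℝ) := by
          push_cast; nlinarith [Nat.cast_nonneg (α := ℝ) m]
        have hd : ((m + 1 : ℕ) : ℝ) * (x0 - 1) ≤ ((m + 1 : ℕ) : ℝ) * z :=
          mul_le_mul_of_nonneg_left hz.1 (Nat.cast_nonneg _)
        exact mul_le_mul_of_nonneg_left (Real.exp_le_exp.mpr hd)
          (mul_nonneg h1 (hn_nonneg _))
    have := ge_of_tendsto (hT2.sub hT1) hevent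
    linarith
  · -- L2 ≤ 27
    refine le_of_tendsto hT2 ?_
    refine eventually_of_mem self_mem_nhdsWithin fun z hz => hF2le z hz
end

section
/- Let (x,y,w) solve the system x' = 27x + 4y², y' = 9x + 18y + 2yw, w' = 3x + 6y + 9w + w² on (-∞, t_0), with x,y,w > 0 and 2y - 3w > 0 on (-∞, t_0), and suppose ∫_{t_0-1}^{t_0} (y+w) dt = +∞. Then (2y-3w)(t) → +∞ as t → t_0⁻, and there exists a unique t_1 ∈ (-∞, t_0) with (2y - 3w)(t_1) = 27. -/
open Set

open Filter MeasureTheory in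
theorem u_blows_up_and_unique_crossing
    (t0 : ℝ) (x y w : ℝ → ℝ)
    (hx : ∀ t < t0, HasDerivAt x (27 * x t + 4 * (y t) ^ 2) t)
    (hy : ∀ t < t0, HasDerivAt y (9 * x t + 18 * y t + 2 * y t * w t) t)
    (hw : ∀ t < t0, HasDerivAt w (3 * x t + 6 * y t + 9 * w t + (w t) ^ 2) t)
    (hpos : ∀ t < t0, 0 < x t ∧ 0 < y t ∧ 0 < w t)
    (hu : ∀ t < t0, 0 < 2 * y t - 3 * w t)
    (hint : ∫⁻ t in Set.Ioo (t0 - 1) t0, ENNReal.ofReal (y t + w t) = ⊤) :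
    Tendsto (fun t => 2 * y t - 3 * w t) (nhdsWithin t0 (Set.Iio t0)) atTop ∧
    ∃! t1 : ℝ, t1 < t0 ∧ 2 * y t1 - 3 * w t1 = 27 := by
  have hx0 : ∀ t < t0, 0 < x t := fun t ht => (hpos t ht).1
  have hy0 : ∀ t < t0, 0 < y t := fun t ht => (hpos t ht).2.1
  have hw0 : ∀ t < t0, 0 < w t := fun t ht => (hpos t ht).2.2
  set u : ℝ → ℝ := fun t => 2 * y t - 3 * w t with hu_def
  set f : ℝ → ℝ := fun t => y t + w t with hf_def
  have hupos : ∀ t < t0, 0 < u t := by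
    intro t ht; simpa [hu_def] using hu t ht
  have hu' : ∀ t < t0, HasDerivAt u (9 * x t + (9 + w t) * u t + 2 * w t * y t) t := by
    intro t ht
    have h := ((hy t ht).const_mul (2:ℝ)).sub ((hw t ht).const_mul (3:ℝ))
    have e : 9 * x t + (9 + w t) * u t + 2 * w t * y t
        = 2 * (9 * x t + 18 * y t + 2 * y t * w t)
          - 3 * (3 * x t + 6 * y t + 9 * w t + (w t) ^ 2) := by
      simp only [hu_def]; ring
    rw [e]; exact h
  have ucont : ContinuousOn u (Iio t0) :=
    fun t ht => (hu' t ht).continuousAt.continuousWithinAt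
  have wcont : ContinuousOn w (Iio t0) :=
    fun t ht => (hw t ht).continuousAt.continuousWithinAt
  have fcont : ContinuousOn f (Iio t0) :=
    fun t ht => ((hy t ht).continuousAt.add (hw t ht).continuousAt).continuousWithinAt
  have umono : StrictMonoOn u (Iio t0) := by
    apply strictMonoOn_of_deriv_pos (convex_Iio t0) ucont
    intro s hs
    rw [interior_Iio] at hs
    rw [(hu' s hs).deriv]
    have h1 := hx0 s hs; have h2 := hy0 s hs; have h3 := hw0 s hs
    have h4 := hupos s hs
    nlinarith [mul_pos h3 h2, mul_pos h3 h4]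
  have wmono : StrictMonoOn w (Iio t0) := by
    apply strictMonoOn_of_deriv_pos (convex_Iio t0) wcont
    intro s hs
    rw [interior_Iio] at hs
    rw [(hw s hs).deriv]
    have h1 := hx0 s hs; have h2 := hy0 s hs; have h3 := hw0 s hs
    nlinarith [sq_nonneg (w s)]
  -- the base point a
  set a : ℝ := t0 - 1/2 with ha_def
  have ha : a < t0 := by rw [ha_def]; linarith
  have hua : 0 < u a := hupos a ha
  have hwa : 0 < w a := hw0 a ha
  set c : ℝ := min (u a) (2 * w a) with hc_def
  have hc : 0 < c := lt_min hua (by linarith)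
  -- interval integrability of f
  have hsubIio : ∀ {b b' : ℝ}, b < t0 → b' < t0 → uIcc b b' ⊆ Iio t0 := by
    intro b b' hb hb' z hz
    rcases mem_uIcc.mp hz with h | h
    · exact lt_of_le_of_lt h.2 hb'
    · exact lt_of_le_of_lt h.2 hb
  have hII : ∀ {b b' : ℝ}, b < t0 → b' < t0 → IntervalIntegrable f volume b b' :=
    fun hb hb' => (fcont.mono (hsubIio hb hb')).intervalIntegrable
  set I : ℝ → ℝ := fun t => ∫ s in a..t, f s with hI_def
  have hI' : ∀ t < t0, HasDerivAt I (f t) t := fun t ht =>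
    intervalIntegral.integral_hasDerivAt_right (hII ha ht)
      (fcont.stronglyMeasurableAtFilter isOpen_Iio t ht)
      (fcont.continuousAt (Iio_mem_nhds ht))
  have Icont : ContinuousOn I (Iio t0) :=
    fun t ht => (hI' t ht).continuousAt.continuousWithinAt
  -- key differential inequality : u t ≥ u a + c * I t on (a, t0)
  have hg_mono : StrictMonoOn (fun t => u t - c * I t) (Ico a t0) := by
    apply strictMonoOn_of_deriv_pos (convex_Ico a t0)
    · exact (ucont.mono Ico_subset_Iio_self).sub
        (continuousOn_const.mul (Icont.mono Ico_subset_Iio_self))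
    · intro s hs
      rw [interior_Ico] at hs
      have hs0 : s < t0 := hs.2
      have hder : HasDerivAt (fun t => u t - c * I t)
          ((9 * x s + (9 + w s) * u s + 2 * w s * y s) - c * f s) s :=
        (hu' s hs0).sub ((hI' s hs0).const_mul c)
      rw [hder.deriv]
      have hx' := hx0 s hs0; have hy' := hy0 s hs0; have hw' := hw0 s hs0
      have hus := hupos s hs0
      have hu_s : u a < u s := umono (mem_Iio.mpr ha) (mem_Iio.mpr hs0) hs.1
      have hw_s : w a < w s := wmono (mem_Iio.mpr ha) (mem_Iio.mpr hs0) hs.1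
      have hcu : c ≤ u a := min_le_left _ _
      have hcw : c ≤ 2 * w a := min_le_right _ _
      have e1 : c * w s ≤ u s * w s := mul_le_mul_of_nonneg_right (by linarith) hw'.le
      have e2 : c * y s ≤ 2 * w s * y s := mul_le_mul_of_nonneg_right (by linarith) hy'.le
      have hfs : f s = y s + w s := rfl
      rw [hfs]
      nlinarith [mul_pos hw' hus]
  have hIa : I a = 0 := intervalIntegral.integral_same
  have key : ∀ t ∈ Ioo a t0, u a + c * I t ≤ u t := by
    intro t ht
    have h := hg_mono (left_mem_Ico.mpr ha) ⟨ht.1.le, ht.2⟩ ht.1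
    simp only [hIa] at h
    linarith
  -- the lintegral over (a, t0) is infinite
  have fpos : ∀ t < t0, 0 < f t := by
    intro t ht
    have := hy0 t ht; have := hw0 t ht
    simp only [hf_def]; linarith
  have htop : ∫⁻ s in Ioo a t0, ENNReal.ofReal (f s) = ⊤ := by
    have hsub_union : Ioo (t0 - 1) t0 ⊆ Ioc (t0 - 1) a ∪ Ioo a t0 := by
      intro z hz
      rcases le_or_gt z a with h | h
      · exact Or.inl ⟨hz.1, h⟩
      · exact Or.inr ⟨h, hz.2⟩
    have hfin1 : ∫⁻ s in Ioc (t0 - 1) a, ENNReal.ofReal (f s) < ⊤ := by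
      obtain ⟨C, hC⟩ := (isCompact_Icc (a := t0 - 1) (b := a)).exists_bound_of_continuousOn
        (fcont.mono (fun z hz => lt_of_le_of_lt hz.2 ha))
      calc ∫⁻ s in Ioc (t0 - 1) a, ENNReal.ofReal (f s)
          ≤ ∫⁻ _ in Ioc (t0 - 1) a, ENNReal.ofReal C := by
            apply setLIntegral_mono' measurableSet_Ioc
            intro s hs
            exact ENNReal.ofReal_le_ofReal
              (le_trans (le_abs_self _) (hC s (Ioc_subset_Icc_self hs)))
        _ = ENNReal.ofReal C * volume (Ioc (t0 - 1) a) := by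
            rw [lintegral_const, Measure.restrict_apply MeasurableSet.univ, univ_inter]
        _ < ⊤ := ENNReal.mul_lt_top ENNReal.ofReal_lt_top measure_Ioc_lt_top
    by_contra hne
    have h1 : (⊤ : ENNReal) ≤ (∫⁻ s in Ioc (t0 - 1) a, ENNReal.ofReal (f s))
        + ∫⁻ s in Ioo a t0, ENNReal.ofReal (f s) := by
      rw [← hint]
      exact le_trans (lintegral_mono_set hsub_union) (lintegral_union_le _ _ _)
    have h2 : (∫⁻ s in Ioc (t0 - 1) a, ENNReal.ofReal (f s))
        + (∫⁻ s in Ioo a t0, ENNReal.ofReal (f s)) < ⊤ :=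
      ENNReal.add_lt_top.mpr ⟨hfin1, lt_top_iff_ne_top.2 hne⟩
    exact absurd (lt_of_le_of_lt h1 h2) (lt_irrefl _)
  -- I is unbounded on (a, t0)
  have hunbdd : ∀ M : ℝ, ∃ t ∈ Ioo a t0, M ≤ I t := by
    intro M
    by_contra hcon
    push_neg at hcon
    set ν : Measure ℝ :=
      (volume.restrict (Ioo a t0)).withDensity (fun s => ENNReal.ofReal (f s)) with hν
    have hν_apply : ∀ {s : Set ℝ}, MeasurableSet s →
        ν s = ∫⁻ z in s ∩ Ioo a t0, ENNReal.ofReal (f z) := by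
      intro s hs
      rw [hν, withDensity_apply _ hs, Measure.restrict_restrict hs]
    have hb : ∀ b ∈ Ioo a t0, ν (Ioo a b) ≤ ENNReal.ofReal M := by
      intro b hbm
      rw [hν_apply measurableSet_Ioo,
        inter_eq_self_of_subset_left (Ioo_subset_Ioo_right hbm.2.le)]
      have hInt : IntegrableOn f (Ioo a b) :=
        ((fcont.mono (fun z hz => lt_of_le_of_lt hz.2 hbm.2)).integrableOn_Icc).mono_set
          Ioo_subset_Icc_self
      have hnn : 0 ≤ᵐ[volume.restrict (Ioo a b)] f :=
        (ae_restrict_iff' measurableSet_Ioo).2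
          (ae_of_all _ fun s hs => (fpos s (hs.2.trans hbm.2)).le)
      rw [← ofReal_integral_eq_lintegral_ofReal hInt hnn]
      apply ENNReal.ofReal_le_ofReal
      have hIb : I b = ∫ s in Ioo a b, f s := by
        simp only [hI_def]
        rw [intervalIntegral.integral_of_le hbm.1.le, integral_Ioc_eq_integral_Ioo]
      rw [← hIb]
      exact (hcon b hbm).le
    set tseq : ℕ → ℝ := fun n => t0 - (t0 - a) / (n + 1) with hts
    have htlt : ∀ n, tseq n < t0 := by
      intro n
      have : (0:ℝ) < (t0 - a) / (n + 1) := by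
        apply div_pos (by linarith)
        positivity
      simp only [hts]; linarith
    have hbound : ∀ n, ν (Ioo a (tseq n)) ≤ ENNReal.ofReal M := by
      intro n
      rcases le_or_gt (tseq n) a with h | h
      · rw [Ioo_eq_empty (by exact fun hlt => absurd h (not_le.mpr hlt))]
        simp
      · exact hb _ ⟨h, htlt n⟩
    have hmono_seq : Monotone (fun n => Ioo a (tseq n)) := by
      intro m n hmn
      apply Ioo_subset_Ioo_right
      simp only [hts]
      have h1 : (t0 - a) / (↑n + 1) ≤ (t0 - a) / (↑m + 1) := by
        apply div_le_div_of_nonneg_left (by linarith) (by positivity)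
        exact_mod_cast by exact_mod_cast add_le_add_left (Nat.cast_le.mpr hmn) 1
      linarith
    have hUnion : ⋃ n, Ioo a (tseq n) = Ioo a t0 := by
      apply Subset.antisymm
      · exact iUnion_subset fun n => Ioo_subset_Ioo_right (htlt n).le
      · intro z hz
        obtain ⟨n, hn⟩ := exists_nat_gt ((t0 - a) / (t0 - z))
        refine mem_iUnion.2 ⟨n, hz.1, ?_⟩
        have hz0 : 0 < t0 - z := by linarith [hz.2]
        have hn1 : (t0 - a) / (t0 - z) < (n:ℝ) + 1 := by linarith
        rw [div_lt_iff₀ hz0] at hn1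
        have h2 : (t0 - a) / ((n:ℝ) + 1) < t0 - z := by
          rw [div_lt_iff₀ (by positivity)]
          nlinarith
        simp only [hts]; linarith
    have hd : Directed (· ⊆ ·) (fun n => Ioo a (tseq n)) := hmono_seq.directed_le
    have heq := hd.measure_iUnion (μ := ν)
    rw [hUnion] at heq
    have hνtop : ν (Ioo a t0) = ⊤ := by
      rw [hν_apply measurableSet_Ioo, inter_self]; exact htop
    rw [hνtop] at heq
    have : (⊤ : ENNReal) ≤ ENNReal.ofReal M := heq ▸ iSup_le hbound
    exact absurd (lt_of_le_of_lt this ENNReal.ofReal_lt_top) (lt_irrefl _)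
  -- blow-up
  have hblow : Tendsto u (nhdsWithin t0 (Iio t0)) atTop := by
    rw [tendsto_atTop]
    intro M
    obtain ⟨b, hbm, hbI⟩ := hunbdd (max 0 ((M - u a) / c))
    filter_upwards [Ioo_mem_nhdsLT hbm.2] with t ht
    have ht' : t ∈ Ioo a t0 := ⟨hbm.1.trans ht.1, ht.2⟩
    have h1 := key t ht'
    have hIb : I b ≤ I t := by
      have e : I t - I b = ∫ s in b..t, f s :=
        intervalIntegral.integral_interval_sub_left (hII ha ht.2) (hII ha hbm.2)
      have hnn : 0 ≤ ∫ s in b..t, f s := by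
        apply intervalIntegral.integral_nonneg ht.1.le
        intro s hs
        exact (fpos s (lt_of_le_of_lt hs.2 ht.2)).le
      linarith
    have hcM : M - u a ≤ c * I b := by
      rcases le_or_gt M (u a) with h | h
      · have h0 : 0 ≤ I b := le_trans (le_max_left _ _) hbI
        nlinarith
      · have h2 : (M - u a) / c ≤ I b := le_trans (le_max_right _ _) hbI
        have := mul_le_mul_of_nonneg_left h2 hc.le
        calc M - u a = c * ((M - u a) / c) := by field_simp
          _ ≤ c * I b := this
    have : c * I b ≤ c * I t := mul_le_mul_of_nonneg_left hIb hc.le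
    linarith
  constructor
  · exact hblow
  -- decay at -∞
  have hv' : ∀ t < t0, HasDerivAt (fun t => u t * Real.exp (-(9 * t)))
      ((9 * x t + (9 + w t) * u t + 2 * w t * y t) * Real.exp (-(9 * t))
        + u t * (Real.exp (-(9 * t)) * -(9 * 1))) t := by
    intro t ht
    have hexp : HasDerivAt (fun t : ℝ => Real.exp (-(9 * t))) (Real.exp (-(9 * t)) * -(9 * 1)) t :=
      HasDerivAt.exp (((hasDerivAt_id t).const_mul (9:ℝ)).neg)
    exact (hu' t ht).mul hexp
  have hv_mono : MonotoneOn (fun t => u t * Real.exp (-(9 * t))) (Iio t0) := by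
    apply monotoneOn_of_deriv_nonneg (convex_Iio t0)
    · exact ucont.mul
        (Real.continuous_exp.comp ((continuous_const.mul continuous_id).neg)).continuousOn
    · intro s hs
      rw [interior_Iio] at hs
      exact (hv' s hs).differentiableAt.differentiableWithinAt
    · intro s hs
      rw [interior_Iio] at hs
      rw [(hv' s hs).deriv]
      have hx' := hx0 s hs; have hy' := hy0 s hs; have hw' := hw0 s hs
      have hus := hupos s hs
      have hex := Real.exp_pos (-(9 * s))
      have hkey : 0 ≤ 9 * x s + w s * u s + 2 * w s * y s := by
        nlinarith [mul_pos hw' hus, mul_pos hw' hy']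
      have : (9 * x s + (9 + w s) * u s + 2 * w s * y s) * Real.exp (-(9 * s))
          + u s * (Real.exp (-(9 * s)) * -(9 * 1))
          = (9 * x s + w s * u s + 2 * w s * y s) * Real.exp (-(9 * s)) := by ring
      rw [this]
      positivity
  have h27 : ∃ s < t0, u s < 27 := by
    have hdecay : Tendsto (fun s => u a * Real.exp (9 * (s - a))) atBot (nhds 0) := by
      have h1 : Tendsto (fun s : ℝ => 9 * (s - a)) atBot atBot := by
        apply Tendsto.const_mul_atBot (by norm_num : (0:ℝ) < 9)
        exact tendsto_atBot_add_const_right _ (-a) tendsto_id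
      have h2 : Tendsto (fun s => Real.exp (9 * (s - a))) atBot (nhds 0) :=
        Real.tendsto_exp_atBot.comp h1
      simpa using h2.const_mul (u a)
    have hev : ∀ᶠ s in atBot, u a * Real.exp (9 * (s - a)) < 27 :=
      hdecay.eventually_lt_const (by norm_num)
    obtain ⟨s, hs27, hsa⟩ := (hev.and (eventually_lt_atBot a)).exists
    refine ⟨s, hsa.trans ha, ?_⟩
    have hvs := hv_mono (mem_Iio.mpr (hsa.trans ha)) (mem_Iio.mpr ha) hsa.le
    have hmul := mul_le_mul_of_nonneg_right hvs (Real.exp_pos (9 * s)).le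
    have e1 : u s * Real.exp (-(9 * s)) * Real.exp (9 * s) = u s := by
      rw [mul_assoc, ← Real.exp_add]; simp
    have e2 : u a * Real.exp (-(9 * a)) * Real.exp (9 * s) = u a * Real.exp (9 * (s - a)) := by
      have e : -(9 * a) + 9 * s = 9 * (s - a) := by ring
      rw [mul_assoc, ← Real.exp_add, e]
    rw [e1, e2] at hmul
    linarith
  -- existence of a point above 27
  have h27' : ∃ b < t0, 27 < u b := by
    have hev : ∀ᶠ t in nhdsWithin t0 (Iio t0), 27 < u t :=
      hblow.eventually (eventually_gt_atTop 27)
    obtain ⟨b, hb1, hb2⟩ := (hev.and eventually_mem_nhdsWithin).exists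
    exact ⟨b, hb2, hb1⟩
  obtain ⟨s, hst0, hs27⟩ := h27
  obtain ⟨b, hbt0, hb27⟩ := h27'
  have hsb : s < b := by
    by_contra h
    push_neg at h
    rcases lt_or_eq_of_le h with h' | h'
    · have := umono (mem_Iio.mpr hbt0) (mem_Iio.mpr hst0) h'
      linarith
    · rw [h'] at hb27; linarith
  have hIcc : Icc s b ⊆ Iio t0 := fun z hz => lt_of_le_of_lt hz.2 hbt0
  obtain ⟨t1, ht1mem, ht1⟩ := intermediate_value_Icc hsb.le (ucont.mono hIcc)
    ⟨hs27.le, hb27.le⟩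
  have ht1t0 : t1 < t0 := lt_of_le_of_lt ht1mem.2 hbt0
  refine ⟨t1, ⟨ht1t0, by simpa [hu_def] using ht1⟩, ?_⟩
  rintro t2 ⟨ht2t0, ht2'⟩
  have ht2u : u t2 = 27 := by simpa [hu_def] using ht2'
  by_contra hne
  rcases lt_or_gt_of_ne hne with h | h
  · have := umono (mem_Iio.mpr ht2t0) (mem_Iio.mpr ht1t0) h
    rw [ht1, ht2u] at this
    exact lt_irrefl _ this
  · have := umono (mem_Iio.mpr ht1t0) (mem_Iio.mpr ht2t0) h
    rw [ht1, ht2u] at this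
    exact lt_irrefl _ this
end
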